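/- Let λ₁, λ₂, λ₃, λ₄ be pairwise distinct complex numbers and w_{ij} (1 ≤ i < j ≤ 4) complex numbers. Define ω_{ij}(λ) = (1/(λ−λ_i) − 1/(λ−λ_j)) w_{ij}. Then the relation ω₂₃(λ)ω₁₄(λ) − ω₁₃(λ)ω₂₄(λ) + ω₁₂(λ)ω₃₄(λ) = 0 holds for all λ ∉ {λ₁,λ₂,λ₃,λ₄} if and only if (λ₃−λ₂)(λ₄−λ₁)w₂₃w₁₄ − (λ₃−λ₁)(λ₄−λ₂)w₁₃w₂₄ + (λ₂−λ₁)(λ₄−λ₃)w₁₂w₃₄ = 0. -/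

import Mathlib

lemma key (l1 l2 l3 l4 lam : ℂ) (w12 w13 w14 w23 w24 w34 : ℂ)
    (h1 : lam ≠ l1) (h2 : lam ≠ l2) (h3 : lam ≠ l3) (h4 : lam ≠ l4) :
    ((1/(lam - l2) - 1/(lam - l3)) * w23) * ((1/(lam - l1) - 1/(lam - l4)) * w14) -
      ((1/(lam - l1) - 1/(lam - l3)) * w13) * ((1/(lam - l2) - 1/(lam - l4)) * w24) +
      ((1/(lam - l1) - 1/(lam - l2)) * w12) * ((1/(lam - l3) - 1/(lam - l4)) * w34)
    = ((l3 - l2) * (l4 - l1) * w23 * w14 - (l3 - l1) * (l4 - l2) * w13 * w24 +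
      (l2 - l1) * (l4 - l3) * w12 * w34) /
      ((lam - l1) * (lam - l2) * (lam - l3) * (lam - l4)) := by
  have e1 : lam - l1 ≠ 0 := sub_ne_zero.mpr h1
  have e2 : lam - l2 ≠ 0 := sub_ne_zero.mpr h2
  have e3 : lam - l3 ≠ 0 := sub_ne_zero.mpr h3
  have e4 : lam - l4 ≠ 0 := sub_ne_zero.mpr h4
  have t : ∀ a b c d w v : ℂ, a ≠ 0 → b ≠ 0 → c ≠ 0 → d ≠ 0 →
      ((1/a - 1/b) * w) * ((1/c - 1/d) * v) = ((b - a)*(d - c)*w*v) / (a*(b*(c*d))) := by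
    intro a b c d w v ha hb hc hd
    field_simp
  rw [t _ _ _ _ _ _ e2 e3 e1 e4, t _ _ _ _ _ _ e1 e3 e2 e4, t _ _ _ _ _ _ e1 e2 e3 e4]
  rw [show (lam-l2)*((lam-l3)*((lam-l1)*(lam-l4))) = (lam-l1)*((lam-l2)*((lam-l3)*(lam-l4))) from by ring,
      show (lam-l1)*((lam-l3)*((lam-l2)*(lam-l4))) = (lam-l1)*((lam-l2)*((lam-l3)*(lam-l4))) from by ring,
      show (lam-l1)*(lam-l2)*(lam-l3)*(lam-l4) = (lam-l1)*((lam-l2)*((lam-l3)*(lam-l4))) from by ring,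
      div_sub_div_same, ← add_div]
  congr 1
  ring

/-- The λ-dependent Plücker relation for simple-pole coefficients
`ω_ij(λ) = (1/(λ−λ_i) − 1/(λ−λ_j)) w_ij` holds for all λ outside the poles iff a single
λ-independent quadratic relation on the `w_ij` holds. -/
theorem stmt2 (l1 l2 l3 l4 : ℂ) (w12 w13 w14 w23 w24 w34 : ℂ)
    (h12 : l1 ≠ l2) (h13 : l1 ≠ l3) (h14 : l1 ≠ l4)
    (h23 : l2 ≠ l3) (h24 : l2 ≠ l4) (h34 : l3 ≠ l4) :
    (∀ lam : ℂ, lam ≠ l1 → lam ≠ l2 → lam ≠ l3 → lam ≠ l4 →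
      ((1/(lam - l2) - 1/(lam - l3)) * w23) * ((1/(lam - l1) - 1/(lam - l4)) * w14) -
      ((1/(lam - l1) - 1/(lam - l3)) * w13) * ((1/(lam - l2) - 1/(lam - l4)) * w24) +
      ((1/(lam - l1) - 1/(lam - l2)) * w12) * ((1/(lam - l3) - 1/(lam - l4)) * w34) = 0)
    ↔ (l3 - l2) * (l4 - l1) * w23 * w14 - (l3 - l1) * (l4 - l2) * w13 * w24 +
      (l2 - l1) * (l4 - l3) * w12 * w34 = 0 := by
  constructor
  · intro h
    obtain ⟨lam, hlam⟩ := Infinite.exists_notMem_finset ({l1, l2, l3, l4} : Finset ℂ)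
    simp only [Finset.mem_insert, Finset.mem_singleton, not_or] at hlam
    obtain ⟨h1, h2, h3, h4⟩ := hlam
    have := h lam h1 h2 h3 h4
    rw [key l1 l2 l3 l4 lam w12 w13 w14 w23 w24 w34 h1 h2 h3 h4] at this
    have e1 : lam - l1 ≠ 0 := sub_ne_zero.mpr h1
    have e2 : lam - l2 ≠ 0 := sub_ne_zero.mpr h2
    have e3 : lam - l3 ≠ 0 := sub_ne_zero.mpr h3
    have e4 : lam - l4 ≠ 0 := sub_ne_zero.mpr h4
    have hden : (lam - l1) * (lam - l2) * (lam - l3) * (lam - l4) ≠ 0 :=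
      mul_ne_zero (mul_ne_zero (mul_ne_zero e1 e2) e3) e4
    rcases div_eq_zero_iff.mp this with hc | hd
    · exact hc
    · exact absurd hd hden
  · intro h lam h1 h2 h3 h4
    rw [key l1 l2 l3 l4 lam w12 w13 w14 w23 w24 w34 h1 h2 h3 h4, h, zero_div]
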